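/- Let H(A,B,b,l) = C(B,b)^{-1} Σ_{i=l}^{b} C(A,i)C(B−A,b−i) be the upper tail of a hypergeometric distribution, and write l = (A/B + α)b with α > 0. Then H(A,B,b,l) ≤ exp(−2α²b). -/

import Mathlib

open Finset

lemma descFac_ineq (A B j : ℕ) (hAB : A ≤ B) :
    A.descFactorial j * B ^ j ≤ B.descFactorial j * A ^ j := by
  induction j with
  | zero => simp
  | succ j ih =>
    rw [Nat.descFactorial_succ, Nat.descFactorial_succ, pow_succ, pow_succ]
    have h2 : (A - j) * B ≤ (B - j) * A := by
      rcases le_or_gt A j with h | h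
      · simp [Nat.sub_eq_zero_of_le h]
      · rw [Nat.sub_mul, Nat.sub_mul]
        exact tsub_le_tsub (le_of_eq (Nat.mul_comm A B)) (Nat.mul_le_mul_left j hAB)
    calc (A - j) * A.descFactorial j * (B ^ j * B)
        = ((A - j) * B) * (A.descFactorial j * B ^ j) := by ring
      _ ≤ ((B - j) * A) * (B.descFactorial j * A ^ j) := Nat.mul_le_mul h2 ih
      _ = (B - j) * B.descFactorial j * (A ^ j * A) := by ring

lemma chooseB (A B j : ℕ) (hAB : A ≤ B) :
    A.choose j * B ^ j ≤ B.choose j * A ^ j := by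
  have h := descFac_ineq A B j hAB
  rw [Nat.descFactorial_eq_factorial_mul_choose, Nat.descFactorial_eq_factorial_mul_choose] at h
  have hf := j.factorial_pos
  have h' : j.factorial * (A.choose j * B ^ j) ≤ j.factorial * (B.choose j * A ^ j) := by
    rw [← Nat.mul_assoc, ← Nat.mul_assoc]; exact h
  exact Nat.le_of_mul_le_mul_left h' hf

lemma key_sum (A B b j : ℕ) (hAB : A ≤ B) (hjb : j ≤ b) :
    ∑ i ∈ range (b + 1), A.choose i * (B - A).choose (b - i) * i.choose j
      = A.choose j * (B - j).choose (b - j) := by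
  rcases lt_or_ge A j with hjA | hjA
  · rw [Nat.choose_eq_zero_of_lt hjA, Nat.zero_mul]
    apply Finset.sum_eq_zero
    intro i _
    rcases lt_or_ge i j with h | h
    · rw [Nat.choose_eq_zero_of_lt h]; ring
    · rw [Nat.choose_eq_zero_of_lt (lt_of_lt_of_le hjA h)]; ring
  · -- j ≤ A
    have hstep : ∑ i ∈ range (b + 1), A.choose i * (B - A).choose (b - i) * i.choose j
        = ∑ i ∈ Ico j (b + 1), A.choose i * (B - A).choose (b - i) * i.choose j := by
      rw [range_eq_Ico]
      refine (Finset.sum_subset (Finset.Ico_subset_Ico (Nat.zero_le j) le_rfl) ?_).symm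
      intro i hi hni
      simp only [mem_Ico] at hi hni
      have : i < j := by omega
      rw [Nat.choose_eq_zero_of_lt this]; ring
    rw [hstep, Finset.sum_Ico_eq_sum_range]
    have hbj : b + 1 - j = (b - j) + 1 := by omega
    rw [hbj]
    have hterm : ∀ k ∈ range ((b - j) + 1),
        A.choose (j + k) * (B - A).choose (b - (j + k)) * (j + k).choose j
          = A.choose j * ((A - j).choose k * (B - A).choose ((b - j) - k)) := by
      intro k _
      have h1 : b - (j + k) = (b - j) - k := by omega
      rcases le_or_gt (j + k) A with hiA | hiA
      · have h2 := Nat.choose_mul (n := A) (Nat.le_add_right j k)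
        rw [h1]
        calc A.choose (j + k) * (B - A).choose ((b-j)-k) * (j + k).choose j
            = A.choose (j+k) * (j+k).choose j * (B - A).choose ((b-j)-k) := by ring
          _ = A.choose j * (A - j).choose (j + k - j) * (B - A).choose ((b-j)-k) := by rw [h2]
          _ = _ := by rw [Nat.add_sub_cancel_left]; ring
      · rw [Nat.choose_eq_zero_of_lt hiA, Nat.choose_eq_zero_of_lt (by omega : A - j < k)]
        ring
    rw [Finset.sum_congr rfl hterm, ← Finset.mul_sum]
    congr 1
    have hV := Nat.add_choose_eq (A - j) (B - A) (b - j)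
    rw [Finset.Nat.sum_antidiagonal_eq_sum_range_succ_mk] at hV
    have : A - j + (B - A) = B - j := by omega
    rw [this] at hV
    exact hV.symm

lemma mgf_bound (A B b : ℕ) (hAB : A ≤ B) (hbB : b ≤ B) (hB : 0 < B) (t : ℝ) (ht : 1 ≤ t) :
    ∑ i ∈ range (b + 1), (A.choose i : ℝ) * ((B - A).choose (b - i) : ℝ) * t ^ i
      ≤ (B.choose b : ℝ) * (1 + (t - 1) * ((A : ℝ) / (B : ℝ))) ^ b := by
  set u : ℝ := t - 1 with hu_def
  have hu : 0 ≤ u := by simp [hu_def]; linarith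
  have hBpos : (0 : ℝ) < (B : ℝ) := by exact_mod_cast hB
  have hstep1 : ∀ i ∈ range (b + 1),
      (A.choose i : ℝ) * ((B - A).choose (b - i) : ℝ) * t ^ i
        = ∑ j ∈ range (b + 1),
            (A.choose i : ℝ) * ((B - A).choose (b - i) : ℝ) * ((i.choose j : ℝ) * u ^ j) := by
    intro i hi
    simp only [mem_range] at hi
    have ht' : t = u + 1 := by simp [hu_def]
    rw [ht', add_pow]
    simp only [one_pow, mul_one]
    rw [Finset.mul_sum]
    rw [← Finset.sum_subset (Finset.range_subset_range.2 (by omega : i + 1 ≤ b + 1))]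
    · apply Finset.sum_congr rfl
      intro j _
      ring
    · intro j _ hj
      simp only [mem_range] at hj
      rw [Nat.choose_eq_zero_of_lt (by omega : i < j)]
      push_cast
      ring
  rw [Finset.sum_congr rfl hstep1, Finset.sum_comm]
  have hinner : ∀ j ∈ range (b + 1),
      ∑ i ∈ range (b + 1),
          (A.choose i : ℝ) * ((B - A).choose (b - i) : ℝ) * ((i.choose j : ℝ) * u ^ j)
        = ((A.choose j * (B - j).choose (b - j) : ℕ) : ℝ) * u ^ j := by
    intro j hj
    simp only [mem_range] at hj
    have := key_sum A B b j hAB (by omega)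
    calc ∑ i ∈ range (b + 1),
          (A.choose i : ℝ) * ((B - A).choose (b - i) : ℝ) * ((i.choose j : ℝ) * u ^ j)
        = ((∑ i ∈ range (b + 1), A.choose i * (B - A).choose (b - i) * i.choose j : ℕ) : ℝ) * u ^ j := by
          push_cast [Finset.sum_mul]
          apply Finset.sum_congr rfl
          intro i _; ring
      _ = _ := by rw [this]
  rw [Finset.sum_congr rfl hinner]
  have hbound : ∀ j ∈ range (b + 1),
      ((A.choose j * (B - j).choose (b - j) : ℕ) : ℝ) * u ^ j
        ≤ (B.choose b : ℝ) * ((b.choose j : ℝ) * (u * ((A:ℝ)/(B:ℝ))) ^ j) := by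
    intro j hj
    simp only [mem_range] at hj
    have hid : B.choose b * b.choose j = B.choose j * (B - j).choose (b - j) :=
      Nat.choose_mul (n := B) (by omega)
    have hnat : A.choose j * (B - j).choose (b - j) * B ^ j
        ≤ B.choose b * b.choose j * A ^ j := by
      rw [hid]
      calc A.choose j * (B - j).choose (b - j) * B ^ j
          = (A.choose j * B ^ j) * (B - j).choose (b - j) := by ring
        _ ≤ (B.choose j * A ^ j) * (B - j).choose (b - j) :=
            Nat.mul_le_mul_right _ (chooseB A B j hAB)
        _ = B.choose j * (B - j).choose (b - j) * A ^ j := by ring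
    have hreal : ((A.choose j * (B - j).choose (b - j) : ℕ) : ℝ)
        ≤ (B.choose b : ℝ) * (b.choose j : ℝ) * ((A:ℝ)/(B:ℝ)) ^ j := by
      rw [div_pow, ← mul_div_assoc, le_div_iff₀ (by positivity)]
      exact_mod_cast hnat
    calc ((A.choose j * (B - j).choose (b - j) : ℕ) : ℝ) * u ^ j
        ≤ ((B.choose b : ℝ) * (b.choose j : ℝ) * ((A:ℝ)/(B:ℝ)) ^ j) * u ^ j :=
          mul_le_mul_of_nonneg_right hreal (by positivity)
      _ = (B.choose b : ℝ) * ((b.choose j : ℝ) * (u * ((A:ℝ)/(B:ℝ))) ^ j) := by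
          rw [mul_pow]; ring
  refine le_trans (Finset.sum_le_sum hbound) ?_
  rw [← Finset.mul_sum]
  apply mul_le_mul_of_nonneg_left _ (by positivity)
  rw [add_comm (1:ℝ), add_pow]
  apply le_of_eq
  apply Finset.sum_congr rfl
  intro j _
  simp [hu_def]
  ring


lemma bern_hoeffding (p : ℝ) (hp0 : 0 ≤ p) (hp1 : p ≤ 1) (s : ℝ) (hs : 0 ≤ s) :
    1 - p + p * Real.exp s ≤ Real.exp (p * s + s ^ 2 / 8) := by
  have hφ : ∀ x : ℝ, 0 < 1 - p + p * Real.exp x := by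
    intro x
    rcases eq_or_lt_of_le hp1 with h | h
    · subst h; simpa using Real.exp_pos x
    · have := mul_nonneg hp0 (Real.exp_pos x).le
      linarith
  set g1 : ℝ → ℝ := fun x => p + x / 4 - p * Real.exp x / (1 - p + p * Real.exp x) with hg1_def
  set g : ℝ → ℝ := fun x => p * x + x ^ 2 / 8 - Real.log (1 - p + p * Real.exp x) with hg_def
  have hφ' : ∀ x : ℝ, HasDerivAt (fun x => 1 - p + p * Real.exp x) (p * Real.exp x) x := by
    intro x
    exact ((Real.hasDerivAt_exp x).const_mul p).const_add (1 - p)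
  have hderiv_g : ∀ x : ℝ, HasDerivAt g (g1 x) x := by
    intro x
    have hlog : HasDerivAt (fun x => Real.log (1 - p + p * Real.exp x))
        (p * Real.exp x / (1 - p + p * Real.exp x)) x := (hφ' x).log (hφ x).ne'
    have hpoly : HasDerivAt (fun x : ℝ => p * x + x ^ 2 / 8) (p + x / 4) x := by
      have h1 : HasDerivAt (fun x : ℝ => p * x) p x := by
        simpa using (hasDerivAt_id x).const_mul p
      have h2 : HasDerivAt (fun x : ℝ => x ^ 2 / 8) (x / 4) x := by
        have := (hasDerivAt_pow 2 x).div_const 8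
        exact this.congr_deriv (by norm_num; ring)
      exact h1.add h2
    exact hpoly.sub hlog
  have hderiv_g1 : ∀ x : ℝ, HasDerivAt g1
      (1 / 4 - p * Real.exp x * (1 - p) / (1 - p + p * Real.exp x) ^ 2) x := by
    intro x
    have hnum : HasDerivAt (fun x => p * Real.exp x) (p * Real.exp x) x :=
      (Real.hasDerivAt_exp x).const_mul p
    have hdiv := hnum.div (hφ' x) (hφ x).ne'
    have hlin : HasDerivAt (fun x : ℝ => p + x / 4) (1 / 4) x := by
      simpa using ((hasDerivAt_id x).div_const 4).const_add p
    have := hlin.sub hdiv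
    have h := (hφ x).ne'
    exact this.congr_deriv (by field_simp; ring)
  have hg1nonneg_deriv : ∀ x : ℝ,
      0 ≤ 1 / 4 - p * Real.exp x * (1 - p) / (1 - p + p * Real.exp x) ^ 2 := by
    intro x
    have hpos : (0:ℝ) < (1 - p + p * Real.exp x) ^ 2 := pow_pos (hφ x) 2
    have : p * Real.exp x * (1 - p) / (1 - p + p * Real.exp x) ^ 2 ≤ 1 / 4 := by
      rw [div_le_iff₀ hpos]
      nlinarith [sq_nonneg (1 - p - p * Real.exp x)]
    linarith
  have hmono1 : Monotone g1 := by
    apply monotone_of_deriv_nonneg (fun x => (hderiv_g1 x).differentiableAt)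
    intro x
    rw [(hderiv_g1 x).deriv]
    exact hg1nonneg_deriv x
  have hg1_0 : g1 0 = 0 := by
    simp only [hg1_def, Real.exp_zero, mul_one]
    have : 1 - p + p = 1 := by ring
    rw [this]
    norm_num
  have hg1nonneg : ∀ x : ℝ, 0 ≤ x → 0 ≤ g1 x := by
    intro x hx
    rw [← hg1_0]
    exact hmono1 hx
  have hg_mono : MonotoneOn g (Set.Ici 0) := by
    apply monotoneOn_of_deriv_nonneg (convex_Ici 0)
    · exact (Differentiable.continuous (fun x => (hderiv_g x).differentiableAt)).continuousOn
    · exact fun x _ => ((hderiv_g x).differentiableAt).differentiableWithinAt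
    · intro x hx
      rw [interior_Ici] at hx
      rw [(hderiv_g x).deriv]
      exact hg1nonneg x (le_of_lt hx)
  have hg0 : g 0 = 0 := by
    simp only [hg_def, Real.exp_zero, mul_one, mul_zero]
    have : 1 - p + p = 1 := by ring
    rw [this, Real.log_one]
    norm_num
  have hgs : 0 ≤ g s := by
    rw [← hg0]
    exact hg_mono (Set.self_mem_Ici) hs hs
  have : Real.log (1 - p + p * Real.exp s) ≤ p * s + s ^ 2 / 8 := by
    simp only [hg_def] at hgs
    linarith
  exact (Real.log_le_iff_le_exp (hφ s)).1 this


/-- Chvátal's tail bound for the hypergeometric distribution: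
H(A,B,b,l) ≤ exp(-2α²b) when l = (A/B + α)b with α > 0. -/
theorem stmt15 (A B b l : ℕ) (hAB : A ≤ B) (hbB : b ≤ B) (hB : 0 < B)
    (α : ℝ) (hα : 0 < α) (hl : (l : ℝ) = ((A : ℝ) / (B : ℝ) + α) * (b : ℝ)) :
    (∑ i ∈ Finset.Icc l b, ((A.choose i : ℝ) * ((B - A).choose (b - i) : ℝ)))
        / (B.choose b : ℝ)
      ≤ Real.exp (-2 * α ^ 2 * (b : ℝ)) := by
  rcases lt_or_ge b l with hlb | hlb
  · rw [Finset.Icc_eq_empty (by omega), Finset.sum_empty, zero_div]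
    positivity
  · set p : ℝ := (A : ℝ) / (B : ℝ) with hp_def
    have hBpos : (0 : ℝ) < (B : ℝ) := by exact_mod_cast hB
    have hp0 : 0 ≤ p := by positivity
    have hp1 : p ≤ 1 := by
      rw [hp_def, div_le_one hBpos]
      exact_mod_cast hAB
    set s : ℝ := 4 * α with hs_def
    have hs : 0 ≤ s := by positivity
    set t : ℝ := Real.exp s with ht_def
    have ht1 : 1 ≤ t := Real.one_le_exp hs
    have ht0 : 0 < t := Real.exp_pos s
    have hCB : (0 : ℝ) < (B.choose b : ℝ) := by
      exact_mod_cast Nat.choose_pos hbB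
    have htl : (0 : ℝ) < t ^ l := pow_pos ht0 l
    -- Step 1: pass to the exponential-weighted sum
    have step1 : (∑ i ∈ Finset.Icc l b, ((A.choose i : ℝ) * ((B - A).choose (b - i) : ℝ)))
        ≤ (∑ i ∈ Finset.range (b + 1),
            (A.choose i : ℝ) * ((B - A).choose (b - i) : ℝ) * t ^ i) / t ^ l := by
      rw [le_div_iff₀ htl, Finset.sum_mul]
      have hsub : Finset.Icc l b ⊆ Finset.range (b + 1) := by
        intro i hi
        simp only [Finset.mem_Icc] at hi
        simp only [Finset.mem_range]
        omega
      calc ∑ i ∈ Finset.Icc l b, (A.choose i : ℝ) * ((B - A).choose (b - i) : ℝ) * t ^ l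
          ≤ ∑ i ∈ Finset.Icc l b, (A.choose i : ℝ) * ((B - A).choose (b - i) : ℝ) * t ^ i := by
            apply Finset.sum_le_sum
            intro i hi
            simp only [Finset.mem_Icc] at hi
            have h1 : t ^ l ≤ t ^ i := pow_le_pow_right₀ ht1 hi.1
            have hnn : (0 : ℝ) ≤ (A.choose i : ℝ) * ((B - A).choose (b - i) : ℝ) := by positivity
            exact mul_le_mul_of_nonneg_left h1 hnn
        _ ≤ _ := Finset.sum_le_sum_of_subset_of_nonneg hsub (fun i _ _ => by positivity)
    -- Step 2: Chvátal's MGF bound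
    have step2 := mgf_bound A B b hAB hbB hB t ht1
    -- Step 3: Hoeffding bound on the base
    have step3 : 1 + (t - 1) * p ≤ Real.exp (p * s + s ^ 2 / 8) := by
      have := bern_hoeffding p hp0 hp1 s hs
      rw [ht_def]
      linarith [this]
    have hbase_nn : (0 : ℝ) ≤ 1 + (t - 1) * p := by nlinarith
    have step3' : (1 + (t - 1) * p) ^ b ≤ Real.exp ((p * s + s ^ 2 / 8) * b) := by
      calc (1 + (t - 1) * p) ^ b ≤ (Real.exp (p * s + s ^ 2 / 8)) ^ b :=
            pow_le_pow_left₀ hbase_nn step3 b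
        _ = Real.exp ((p * s + s ^ 2 / 8) * b) := by
            rw [← Real.exp_nat_mul]; ring_nf
    -- combine
    rw [div_le_iff₀ hCB]
    have hfin : (B.choose b : ℝ) * Real.exp ((p * s + s ^ 2 / 8) * b) / t ^ l
        = (B.choose b : ℝ) * Real.exp (-2 * α ^ 2 * (b : ℝ)) := by
      rw [ht_def, ← Real.exp_nat_mul, mul_div_assoc, ← Real.exp_sub]
      congr 1
      have : ((l : ℕ) : ℝ) * s = ((p + α) * (b : ℝ)) * s := by rw [hl]
      rw [this, hs_def]
      ring
    calc (∑ i ∈ Finset.Icc l b, ((A.choose i : ℝ) * ((B - A).choose (b - i) : ℝ)))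
        ≤ (∑ i ∈ Finset.range (b + 1),
            (A.choose i : ℝ) * ((B - A).choose (b - i) : ℝ) * t ^ i) / t ^ l := step1
      _ ≤ (B.choose b : ℝ) * (1 + (t - 1) * p) ^ b / t ^ l := by gcongr
      _ ≤ (B.choose b : ℝ) * Real.exp ((p * s + s ^ 2 / 8) * b) / t ^ l := by
          gcongr
      _ = (B.choose b : ℝ) * Real.exp (-2 * α ^ 2 * (b : ℝ)) := hfin
      _ = Real.exp (-2 * α ^ 2 * (b : ℝ)) * (B.choose b : ℝ) := by ring
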